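/- Let G be the graph consisting of a triangle u v w, together with vertices a, b adjacent to u and v, and vertices c, d adjacent to v and w. Then G contains no K_4-minor rooted at a, b, c, d. -/

import Mathlib

open SimpleGraph

variable {V : Type*}

/-- Branch-set definition of an `H`-minor in `G`. -/
def HasGraphMinor {W : Type*} (G : SimpleGraph V) (H : SimpleGraph W) : Prop :=
  ∃ B : W → Set V,
    (∀ w, (B w).Nonempty) ∧
    (∀ w, (G.induce (B w)).Connected) ∧
    (Pairwise fun w w' => Disjoint (B w) (B w')) ∧
    ∀ ⦃w w'⦄, H.Adj w w' → ∃ x ∈ B w, ∃ y ∈ B w', G.Adj x y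

/-- `A,B,C,D` are the branch sets of a `K₄`-minor rooted at `a,b,c,d`. -/
def RootedK4MinorOn (G : SimpleGraph V) (a b c d : V) (A B C D : Set V) : Prop :=
    a ∈ A ∧ b ∈ B ∧ c ∈ C ∧ d ∈ D ∧
    (G.induce A).Connected ∧ (G.induce B).Connected ∧
    (G.induce C).Connected ∧ (G.induce D).Connected ∧
    Disjoint A B ∧ Disjoint A C ∧ Disjoint A D ∧
    Disjoint B C ∧ Disjoint B D ∧ Disjoint C D ∧
    (∃ x ∈ A, ∃ y ∈ B, G.Adj x y) ∧ (∃ x ∈ A, ∃ y ∈ C, G.Adj x y) ∧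
    (∃ x ∈ A, ∃ y ∈ D, G.Adj x y) ∧ (∃ x ∈ B, ∃ y ∈ C, G.Adj x y) ∧
    (∃ x ∈ B, ∃ y ∈ D, G.Adj x y) ∧ (∃ x ∈ C, ∃ y ∈ D, G.Adj x y)

/-- A `K₄`-minor rooted at `a,b,c,d`. -/
def RootedK4Minor (G : SimpleGraph V) (a b c d : V) : Prop :=
  ∃ A B C D : Set V, RootedK4MinorOn G a b c d A B C D

/-- A `K₃`-minor rooted at `a,b,c`. -/
def RootedK3Minor (G : SimpleGraph V) (a b c : V) : Prop :=
  ∃ A B C : Set V,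
    a ∈ A ∧ b ∈ B ∧ c ∈ C ∧
    (G.induce A).Connected ∧ (G.induce B).Connected ∧ (G.induce C).Connected ∧
    Disjoint A B ∧ Disjoint A C ∧ Disjoint B C ∧
    (∃ x ∈ A, ∃ y ∈ B, G.Adj x y) ∧ (∃ x ∈ A, ∃ y ∈ C, G.Adj x y) ∧
    (∃ x ∈ B, ∃ y ∈ C, G.Adj x y)

/-- Add a new apex vertex adjacent to every vertex of `s`. -/
def Apex (G : SimpleGraph V) (s : Set V) : SimpleGraph (Option V) where
  Adj x y :=
    (∃ u v, x = some u ∧ y = some v ∧ G.Adj u v) ∨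
    (∃ u, x = some u ∧ y = none ∧ u ∈ s) ∨
    (∃ v, x = none ∧ y = some v ∧ v ∈ s)
  symm := by
    constructor
    rintro x y (⟨u, v, rfl, rfl, h⟩ | ⟨u, rfl, rfl, h⟩ | ⟨v, rfl, rfl, h⟩)
    · exact Or.inl ⟨v, u, rfl, rfl, h.symm⟩
    · exact Or.inr (Or.inr ⟨u, rfl, rfl, h⟩)
    · exact Or.inr (Or.inl ⟨v, rfl, rfl, h⟩)
  loopless := by
    constructor
    rintro x (⟨u, v, rfl, h, hadj⟩ | ⟨u, rfl, h, _⟩ | ⟨v, h, rfl, _⟩)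
    · rw [Option.some_inj] at h; subst h; exact hadj.ne rfl
    · exact Option.some_ne_none _ h
    · exact Option.some_ne_none _ h

/-- Planarity, via Wagner's theorem: no `K₅`-minor and no `K₃,₃`-minor. -/
def IsPlanar (G : SimpleGraph V) : Prop :=
  ¬ HasGraphMinor G (⊤ : SimpleGraph (Fin 5)) ∧
  ¬ HasGraphMinor G (completeBipartiteGraph (Fin 3) (Fin 3))

/-- `G` is `k`-connected: more than `k` vertices, and deleting fewer than `k`
vertices leaves a connected graph. -/
def KConnected (k : ℕ) (G : SimpleGraph V) : Prop :=
  k < Nat.card V ∧ ∀ S : Set V, S.Finite → S.ncard < k → (G.induce Sᶜ).Connected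

/-- An `(s₁t₁,s₂t₂)`-linkage: an `s₁t₁`-path and an `s₂t₂`-path that are disjoint. -/
def Linkage (G : SimpleGraph V) (s₁ t₁ s₂ t₂ : V) : Prop :=
  ∃ (P : G.Walk s₁ t₁) (Q : G.Walk s₂ t₂),
    P.IsPath ∧ Q.IsPath ∧ P.support.Disjoint Q.support

/-- `G` is obtained from its induced subgraph on `S` by attaching, to each triangle,
a (possibly empty) clique: `t x` records the triangle of the clique containing `x ∉ S`. -/
def CliqueExpansion (G : SimpleGraph V) (S : Set V) (t : V → Finset V) : Prop :=
  ∀ x ∉ S, ↑(t x) ⊆ S ∧ (t x).card = 3 ∧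
    (∀ y ∈ t x, ∀ z ∈ t x, y ≠ z → G.Adj y z) ∧
    (∀ y, G.Adj x y ↔ (y ∈ t x ∨ (y ∉ S ∧ y ≠ x ∧ t y = t x)))

/-- `H` is a planar graph with outerface cycle `(p,q,r,s)`, every internal face a
triangle, and every triangle a face.  (Combinatorial surrogate: `p,q,r,s` bound a
common face — witnessed by planarity of the graph with an apex added adjacent to
them — the edge count of a near-triangulation of a quadrilateral, and no
separating triangle.) -/
def IsQuadTriangulation {U : Type*} (H : SimpleGraph U) (p q r s : U) : Prop :=
  p ≠ q ∧ p ≠ r ∧ p ≠ s ∧ q ≠ r ∧ q ≠ s ∧ r ≠ s ∧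
  H.Adj p q ∧ H.Adj q r ∧ H.Adj r s ∧ H.Adj s p ∧
  IsPlanar H ∧ IsPlanar (Apex H {p, q, r, s}) ∧
  H.edgeSet.ncard + 7 = 3 * Nat.card U ∧
  ∀ T : Finset U, T.card = 3 → (∀ x ∈ T, ∀ y ∈ T, x ≠ y → H.Adj x y) →
    (((↑T)ᶜ : Set U) = ∅ ∨ (H.induce (↑T)ᶜ).Connected)

/-- `W` is an `(a,b,c,d)`-web. -/
def IsWeb (W : SimpleGraph V) (a b c d : V) : Prop :=
  ∃ (S : Set V) (ha : a ∈ S) (hb : b ∈ S) (hc : c ∈ S) (hd : d ∈ S),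
    IsQuadTriangulation (W.induce S) ⟨a, ha⟩ ⟨b, hb⟩ ⟨c, hc⟩ ⟨d, hd⟩ ∧
    ∃ t, CliqueExpansion W S t

/-- `W` is an `{a,b,c,d}`-web, i.e. an `(a',b',c',d')`-web for some ordering. -/
def IsUnorderedWeb (W : SimpleGraph V) (a b c d : V) : Prop :=
  ∃ p q r s : V, ({p, q, r, s} : Set V) = {a, b, c, d} ∧ IsWeb W p q r s

/-- A separation `(A, B)` of `G` (given by the vertex sets of the two sides). -/
def IsSeparation (G : SimpleGraph V) (A B : Set V) : Prop :=
  A ∪ B = Set.univ ∧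
  (∀ ⦃x y⦄, G.Adj x y → (x ∈ A ∧ y ∈ A) ∨ (x ∈ B ∧ y ∈ B)) ∧
  (A \ B).Nonempty ∧ (B \ A).Nonempty

private def G14 : SimpleGraph (Fin 7) :=
  fromEdgeSet {s(0, 1), s(1, 2), s(0, 2), s(3, 0), s(3, 1), s(4, 0), s(4, 1),
      s(5, 1), s(5, 2), s(6, 1), s(6, 2)}

private lemma nbr34 {x y : Fin 7} (h : G14.Adj x y) (hx : x = 3 ∨ x = 4) :
    y = 0 ∨ y = 1 := by
  rw [G14, fromEdgeSet_adj] at h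
  rcases hx with rfl | rfl <;>
  · simp only [Set.mem_insert_iff, Set.mem_singleton_iff, Sym2.eq, Sym2.rel_iff',
      Prod.mk.injEq, Prod.swap_prod_mk] at h
    tauto

private lemma nbr56 {x y : Fin 7} (h : G14.Adj x y) (hx : x = 5 ∨ x = 6) :
    y = 1 ∨ y = 2 := by
  rw [G14, fromEdgeSet_adj] at h
  rcases hx with rfl | rfl <;>
  · simp only [Set.mem_insert_iff, Set.mem_singleton_iff, Sym2.eq, Sym2.rel_iff',
      Prod.mk.injEq, Prod.swap_prod_mk] at h
    tauto

private lemma pigeon2 {X Y Z : Set (Fin 7)} {p q : Fin 7}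
    (dXY : Disjoint X Y) (dXZ : Disjoint X Z) (dYZ : Disjoint Y Z)
    (hX : p ∈ X ∨ q ∈ X) (hY : p ∈ Y ∨ q ∈ Y) (hZ : p ∈ Z ∨ q ∈ Z) : False := by
  rcases hX with hX | hX <;> rcases hY with hY | hY <;> rcases hZ with hZ | hZ
  exacts [Set.disjoint_left.mp dXY hX hY, Set.disjoint_left.mp dXY hX hY,
    Set.disjoint_left.mp dXZ hX hZ, Set.disjoint_left.mp dYZ hY hZ,
    Set.disjoint_left.mp dYZ hY hZ, Set.disjoint_left.mp dXZ hX hZ,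
    Set.disjoint_left.mp dXY hX hY, Set.disjoint_left.mp dXY hX hY]

private lemma fin7_cases (z : Fin 7) :
    z = 0 ∨ z = 1 ∨ z = 2 ∨ z = 3 ∨ z = 4 ∨ z = 5 ∨ z = 6 := by revert z; decide

private lemma fin7_3 (z : Fin 7) (h0 : z ≠ 0) (h1 : z ≠ 1) (h2 : z ≠ 2)
    (ha : z ≠ 4) (hb : z ≠ 5) (hc : z ≠ 6) : z = 3 := by
  rcases fin7_cases z with rfl | rfl | rfl | rfl | rfl | rfl | rfl <;> simp_all

private lemma fin7_4 (z : Fin 7) (h0 : z ≠ 0) (h1 : z ≠ 1) (h2 : z ≠ 2)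
    (ha : z ≠ 3) (hb : z ≠ 5) (hc : z ≠ 6) : z = 4 := by
  rcases fin7_cases z with rfl | rfl | rfl | rfl | rfl | rfl | rfl <;> simp_all

private lemma fin7_5 (z : Fin 7) (h0 : z ≠ 0) (h1 : z ≠ 1) (h2 : z ≠ 2)
    (ha : z ≠ 3) (hb : z ≠ 4) (hc : z ≠ 6) : z = 5 := by
  rcases fin7_cases z with rfl | rfl | rfl | rfl | rfl | rfl | rfl <;> simp_all

private lemma fin7_6 (z : Fin 7) (h0 : z ≠ 0) (h1 : z ≠ 1) (h2 : z ≠ 2)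
    (ha : z ≠ 3) (hb : z ≠ 4) (hc : z ≠ 5) : z = 6 := by
  rcases fin7_cases z with rfl | rfl | rfl | rfl | rfl | rfl | rfl <;> simp_all

private lemma noK4 : ¬ RootedK4Minor G14 3 4 5 6 := by
  rintro ⟨A, B, C, D, h3A, h4B, h5C, h6D, -, -, -, -,
    dAB, dAC, dAD, dBC, dBD, dCD,
    ⟨xab, hxab, yab, hyab, eab⟩, ⟨xac, hxac, yac, hyac, eac⟩,
    ⟨xad, hxad, yad, hyad, ead⟩, ⟨xbc, hxbc, ybc, hybc, ebc⟩,
    ⟨xbd, hxbd, ybd, hybd, ebd⟩, ⟨xcd, hxcd, ycd, hycd, ecd⟩⟩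
  have fin7 := fin7_3
  have fin7b := fin7_4
  have fin7c := fin7_5
  have fin7d := fin7_6
  -- some branch set contains no hub vertex
  have key : ((0:Fin 7) ∉ A ∧ (1:Fin 7) ∉ A ∧ (2:Fin 7) ∉ A) ∨
      ((0:Fin 7) ∉ B ∧ (1:Fin 7) ∉ B ∧ (2:Fin 7) ∉ B) ∨
      ((0:Fin 7) ∉ C ∧ (1:Fin 7) ∉ C ∧ (2:Fin 7) ∉ C) ∨
      ((0:Fin 7) ∉ D ∧ (1:Fin 7) ∉ D ∧ (2:Fin 7) ∉ D) := by
    by_contra hcon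
    simp only [not_or, not_and_or, not_not] at hcon
    obtain ⟨hA, hB, hC, hD⟩ := hcon
    rcases hA with h | h | h <;> rcases hB with h' | h' | h' <;>
      rcases hC with h'' | h'' | h'' <;> rcases hD with h''' | h''' | h''' <;>
      first
        | exact Set.disjoint_left.mp dAB h h'
        | exact Set.disjoint_left.mp dAC h h''
        | exact Set.disjoint_left.mp dAD h h'''
        | exact Set.disjoint_left.mp dBC h' h''
        | exact Set.disjoint_left.mp dBD h' h'''
        | exact Set.disjoint_left.mp dCD h'' h'''
  have neA : ∀ z ∈ A, z ≠ 4 ∧ z ≠ 5 ∧ z ≠ 6 := fun z hz =>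
    ⟨fun h => Set.disjoint_left.mp dAB (h ▸ hz) h4B,
     fun h => Set.disjoint_left.mp dAC (h ▸ hz) h5C,
     fun h => Set.disjoint_left.mp dAD (h ▸ hz) h6D⟩
  have neB : ∀ z ∈ B, z ≠ 3 ∧ z ≠ 5 ∧ z ≠ 6 := fun z hz =>
    ⟨fun h => Set.disjoint_left.mp dAB h3A (h ▸ hz),
     fun h => Set.disjoint_left.mp dBC (h ▸ hz) h5C,
     fun h => Set.disjoint_left.mp dBD (h ▸ hz) h6D⟩
  have neC : ∀ z ∈ C, z ≠ 3 ∧ z ≠ 4 ∧ z ≠ 6 := fun z hz =>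
    ⟨fun h => Set.disjoint_left.mp dAC h3A (h ▸ hz),
     fun h => Set.disjoint_left.mp dBC h4B (h ▸ hz),
     fun h => Set.disjoint_left.mp dCD (h ▸ hz) h6D⟩
  have neD : ∀ z ∈ D, z ≠ 3 ∧ z ≠ 4 ∧ z ≠ 5 := fun z hz =>
    ⟨fun h => Set.disjoint_left.mp dAD h3A (h ▸ hz),
     fun h => Set.disjoint_left.mp dBD h4B (h ▸ hz),
     fun h => Set.disjoint_left.mp dCD h5C (h ▸ hz)⟩
  rcases key with ⟨n0, n1, n2⟩ | ⟨n0, n1, n2⟩ | ⟨n0, n1, n2⟩ | ⟨n0, n1, n2⟩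
  · -- A = {3}
    have hxab3 : xab = 3 := fin7 _ (fun h => n0 (h ▸ hxab)) (fun h => n1 (h ▸ hxab))
      (fun h => n2 (h ▸ hxab)) (neA _ hxab).1 (neA _ hxab).2.1 (neA _ hxab).2.2
    have hxac3 : xac = 3 := fin7 _ (fun h => n0 (h ▸ hxac)) (fun h => n1 (h ▸ hxac))
      (fun h => n2 (h ▸ hxac)) (neA _ hxac).1 (neA _ hxac).2.1 (neA _ hxac).2.2
    have hxad3 : xad = 3 := fin7 _ (fun h => n0 (h ▸ hxad)) (fun h => n1 (h ▸ hxad))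
      (fun h => n2 (h ▸ hxad)) (neA _ hxad).1 (neA _ hxad).2.1 (neA _ hxad).2.2
    have hB' : (0:Fin 7) ∈ B ∨ (1:Fin 7) ∈ B := by
      rcases nbr34 eab (Or.inl hxab3) with h | h
      · exact Or.inl (h ▸ hyab)
      · exact Or.inr (h ▸ hyab)
    have hC' : (0:Fin 7) ∈ C ∨ (1:Fin 7) ∈ C := by
      rcases nbr34 eac (Or.inl hxac3) with h | h
      · exact Or.inl (h ▸ hyac)
      · exact Or.inr (h ▸ hyac)
    have hD' : (0:Fin 7) ∈ D ∨ (1:Fin 7) ∈ D := by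
      rcases nbr34 ead (Or.inl hxad3) with h | h
      · exact Or.inl (h ▸ hyad)
      · exact Or.inr (h ▸ hyad)
    exact pigeon2 dBC dBD dCD hB' hC' hD'
  · -- B = {4}
    have hy4 : yab = 4 := fin7b _ (fun h => n0 (h ▸ hyab)) (fun h => n1 (h ▸ hyab))
      (fun h => n2 (h ▸ hyab)) (neB _ hyab).1 (neB _ hyab).2.1 (neB _ hyab).2.2
    have hx4 : xbc = 4 := fin7b _ (fun h => n0 (h ▸ hxbc)) (fun h => n1 (h ▸ hxbc))
      (fun h => n2 (h ▸ hxbc)) (neB _ hxbc).1 (neB _ hxbc).2.1 (neB _ hxbc).2.2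
    have hx4' : xbd = 4 := fin7b _ (fun h => n0 (h ▸ hxbd)) (fun h => n1 (h ▸ hxbd))
      (fun h => n2 (h ▸ hxbd)) (neB _ hxbd).1 (neB _ hxbd).2.1 (neB _ hxbd).2.2
    have hA' : (0:Fin 7) ∈ A ∨ (1:Fin 7) ∈ A := by
      rcases nbr34 (eab.symm) (Or.inr hy4) with h | h
      · exact Or.inl (h ▸ hxab)
      · exact Or.inr (h ▸ hxab)
    have hC' : (0:Fin 7) ∈ C ∨ (1:Fin 7) ∈ C := by
      rcases nbr34 ebc (Or.inr hx4) with h | h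
      · exact Or.inl (h ▸ hybc)
      · exact Or.inr (h ▸ hybc)
    have hD' : (0:Fin 7) ∈ D ∨ (1:Fin 7) ∈ D := by
      rcases nbr34 ebd (Or.inr hx4') with h | h
      · exact Or.inl (h ▸ hybd)
      · exact Or.inr (h ▸ hybd)
    exact pigeon2 dAC dAD dCD hA' hC' hD'
  · -- C = {5}
    have hy5 : yac = 5 := fin7c _ (fun h => n0 (h ▸ hyac)) (fun h => n1 (h ▸ hyac))
      (fun h => n2 (h ▸ hyac)) (neC _ hyac).1 (neC _ hyac).2.1 (neC _ hyac).2.2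
    have hy5' : ybc = 5 := fin7c _ (fun h => n0 (h ▸ hybc)) (fun h => n1 (h ▸ hybc))
      (fun h => n2 (h ▸ hybc)) (neC _ hybc).1 (neC _ hybc).2.1 (neC _ hybc).2.2
    have hx5 : xcd = 5 := fin7c _ (fun h => n0 (h ▸ hxcd)) (fun h => n1 (h ▸ hxcd))
      (fun h => n2 (h ▸ hxcd)) (neC _ hxcd).1 (neC _ hxcd).2.1 (neC _ hxcd).2.2
    have hA' : (1:Fin 7) ∈ A ∨ (2:Fin 7) ∈ A := by
      rcases nbr56 (eac.symm) (Or.inl hy5) with h | h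
      · exact Or.inl (h ▸ hxac)
      · exact Or.inr (h ▸ hxac)
    have hB' : (1:Fin 7) ∈ B ∨ (2:Fin 7) ∈ B := by
      rcases nbr56 (ebc.symm) (Or.inl hy5') with h | h
      · exact Or.inl (h ▸ hxbc)
      · exact Or.inr (h ▸ hxbc)
    have hD' : (1:Fin 7) ∈ D ∨ (2:Fin 7) ∈ D := by
      rcases nbr56 ecd (Or.inl hx5) with h | h
      · exact Or.inl (h ▸ hycd)
      · exact Or.inr (h ▸ hycd)
    exact pigeon2 dAB dAD dBD hA' hB' hD'
  · -- D = {6}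
    have hy6 : yad = 6 := fin7d _ (fun h => n0 (h ▸ hyad)) (fun h => n1 (h ▸ hyad))
      (fun h => n2 (h ▸ hyad)) (neD _ hyad).1 (neD _ hyad).2.1 (neD _ hyad).2.2
    have hy6' : ybd = 6 := fin7d _ (fun h => n0 (h ▸ hybd)) (fun h => n1 (h ▸ hybd))
      (fun h => n2 (h ▸ hybd)) (neD _ hybd).1 (neD _ hybd).2.1 (neD _ hybd).2.2
    have hy6'' : ycd = 6 := fin7d _ (fun h => n0 (h ▸ hycd)) (fun h => n1 (h ▸ hycd))
      (fun h => n2 (h ▸ hycd)) (neD _ hycd).1 (neD _ hycd).2.1 (neD _ hycd).2.2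
    have hA' : (1:Fin 7) ∈ A ∨ (2:Fin 7) ∈ A := by
      rcases nbr56 (ead.symm) (Or.inr hy6) with h | h
      · exact Or.inl (h ▸ hxad)
      · exact Or.inr (h ▸ hxad)
    have hB' : (1:Fin 7) ∈ B ∨ (2:Fin 7) ∈ B := by
      rcases nbr56 (ebd.symm) (Or.inr hy6') with h | h
      · exact Or.inl (h ▸ hxbd)
      · exact Or.inr (h ▸ hxbd)
    have hC' : (1:Fin 7) ∈ C ∨ (2:Fin 7) ∈ C := by
      rcases nbr56 (ecd.symm) (Or.inr hy6'') with h | h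
      · exact Or.inl (h ▸ hxcd)
      · exact Or.inr (h ▸ hxcd)
    exact pigeon2 dAB dAC dBC hA' hB' hC'

/-- a triangle `uvw = 0,1,2` with `a,b = 3,4` adjacent to `u,v` and
`c,d = 5,6` adjacent to `v,w` has no `K₄`-minor rooted at `a,b,c,d`. -/
theorem triangle_plus_four_no_rooted_K4_minor :
    ¬ RootedK4Minor
        (fromEdgeSet {s(0, 1), s(1, 2), s(0, 2), s(3, 0), s(3, 1), s(4, 0), s(4, 1),
            s(5, 1), s(5, 2), s(6, 1), s(6, 2)} : SimpleGraph (Fin 7))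
        3 4 5 6 := by
  exact noK4
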